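/- If tubal matrices A and B are orthogonal projectors under the t-product, then A ⊗_t B is also an orthogonal projector under the t-product. -/

import Mathlib

open scoped Matrix Kronecker BigOperators
open MeasureTheory
open scoped ProbabilityTheory

/-- The t-product of two tubal matrices (third-order tensors given by their
frontal slices): `(A*B)_k = ∑_{k'} A_{k-k'} B_{k'}` (circular convolution of slices),
equivalently `A*B = fold(bcirc(A) · unfold(B))`. -/
def tProd {α β γ : Type*} [Fintype β] {l : ℕ}
    (A : Fin l → Matrix α β ℝ) (B : Fin l → Matrix β γ ℝ) :
    Fin l → Matrix α γ ℝ :=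
  fun k => ∑ k' : Fin l, A (k - k') * B k'

/-- The block-circulant matrix of a tubal matrix: the `(a,b)` block is `A_{a-b mod l}`. -/
def bcirc {α β : Type*} {l : ℕ} (A : Fin l → Matrix α β ℝ) :
    Matrix (α × Fin l) (β × Fin l) ℝ :=
  Matrix.of fun p q => A (p.2 - q.2) p.1 q.1

/-- Squared Frobenius norm of a tubal matrix (third-order tensor). -/
def frobSq {α β : Type*} [Fintype α] [Fintype β] {l : ℕ}
    (A : Fin l → Matrix α β ℝ) : ℝ :=
  ∑ k, ∑ i, ∑ j, (A k i j) ^ 2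

/-- Squared Frobenius norm of a real matrix. -/
def matFrobSq {α β : Type*} [Fintype α] [Fintype β] (M : Matrix α β ℝ) : ℝ :=
  ∑ i, ∑ j, (M i j) ^ 2

/-- Tensor transpose under the t-product: transpose each frontal slice and reverse
the order of slices 2 through l, i.e. `(Aᵀ)_k = (A_{-k})ᵀ`. -/
def ttr {α β : Type*} {l : ℕ} (A : Fin l → Matrix α β ℝ) :
    Fin l → Matrix β α ℝ :=
  fun k => (A (-k))ᵀ

/-- Slice transpose: transpose each frontal slice (no reversal). -/
def sliceT {α β : Type*} {l : ℕ} (A : Fin l → Matrix α β ℝ) :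
    Fin l → Matrix β α ℝ :=
  fun k => (A k)ᵀ

/-- Reverse: reverse the order of frontal slices 2 through l. -/
def trev {α β : Type*} {l : ℕ} (A : Fin l → Matrix α β ℝ) :
    Fin l → Matrix α β ℝ :=
  fun k => A (-k)

/-- t-Kronecker product of tubal matrices: `(A ⊗_t B)_k = ∑_{k'} A_{k-k'} ⊗ B_{k'}`,
the block tubal matrix whose `(i,j)` block is `A_{(i,j,:)} * B`. -/
def tkron {α β γ δ : Type*} {l : ℕ}
    (A : Fin l → Matrix α β ℝ) (B : Fin l → Matrix γ δ ℝ) :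
    Fin l → Matrix (α × γ) (β × δ) ℝ :=
  fun k => ∑ k' : Fin l, (A (k - k')) ⊗ₖ (B k')

/-- The identity tubal matrix: first frontal slice is the identity, others zero. -/
def tId (α : Type*) [DecidableEq α] [Fintype α] (l : ℕ) [NeZero l] :
    Fin l → Matrix α α ℝ :=
  fun k => if k = 0 then (1 : Matrix α α ℝ) else 0

/-- t-vectorization: stack the lateral slices of a tubal matrix vertically. -/
def vecT {α β : Type*} {l : ℕ} (B : Fin l → Matrix α β ℝ) :
    Fin l → Matrix (β × α) (Fin 1) ℝ :=
  fun k => Matrix.of fun p _ => B k p.2 p.1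

/-- Discrete Fourier transform along the third dimension:
`Â_k = ∑_j exp(-2πi·jk/l) A_j`. -/
noncomputable def dft {α β : Type*} {l : ℕ} (A : Fin l → Matrix α β ℝ) :
    Fin l → Matrix α β ℂ :=
  fun k => ∑ j : Fin l,
    Complex.exp (-(2 * (Real.pi : ℂ) * Complex.I * (j.1 : ℂ) * (k.1 : ℂ)) / (l : ℂ)) •
      (A j).map Complex.ofReal

/-- Squared Frobenius norm of a complex matrix. -/
def matFrobSqC {α β : Type*} [Fintype α] [Fintype β] (M : Matrix α β ℂ) : ℝ :=
  ∑ i, ∑ j, Complex.normSq (M i j)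


section Aux

open Matrix

lemma sum_kron {ι α β γ δ : Type*} [Fintype ι]
    (U : ι → Matrix α β ℝ) (V : Matrix γ δ ℝ) :
    (∑ i, U i) ⊗ₖ V = ∑ i, (U i) ⊗ₖ V := by
  ext p q
  simp [Matrix.sum_apply, Finset.sum_mul]

lemma kron_sum {ι α β γ δ : Type*} [Fintype ι]
    (U : Matrix α β ℝ) (V : ι → Matrix γ δ ℝ) :
    U ⊗ₖ (∑ i, V i) = ∑ i, U ⊗ₖ (V i) := by
  ext p q
  simp [Matrix.sum_apply, Finset.mul_sum]

lemma triple_sum {l : ℕ} {M : Type*} [AddCommMonoid M]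
    (f : Fin l → Fin l → Fin l → M) :
    ∑ j, ∑ a, ∑ b, f j a b = ∑ p : Fin l × Fin l × Fin l, f p.1 p.2.1 p.2.2 := by
  simp [Fintype.sum_prod_type]

def tripEquiv (l : ℕ) [NeZero l] : (Fin l × Fin l × Fin l) ≃ (Fin l × Fin l × Fin l) where
  toFun p := (p.2.1 + p.2.2, p.2.1, p.1 - p.2.1)
  invFun q := (q.2.2 + q.2.1, q.2.1, q.1 - q.2.1)
  left_inv p := by obtain ⟨j, a, b⟩ := p; simp
  right_inv q := by obtain ⟨k, s, t⟩ := q; simp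

lemma tProd_tkron {l m n : ℕ} [NeZero l]
    (A C : Fin l → Matrix (Fin m) (Fin m) ℝ)
    (B D : Fin l → Matrix (Fin n) (Fin n) ℝ) :
    tProd (tkron A B) (tkron C D) = tkron (tProd A C) (tProd B D) := by
  funext k
  unfold tProd tkron
  simp only [Finset.sum_mul, Finset.mul_sum, sum_kron, kron_sum,
    Matrix.mul_kronecker_mul]
  rw [triple_sum, triple_sum]
  refine Fintype.sum_equiv (tripEquiv l) _ _ ?_
  rintro ⟨j, a, b⟩
  simp only [tripEquiv, Equiv.coe_fn_mk]
  have h1 : k - (a + b) - (j - a) = k - j - b := by abel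
  have h2 : a + b - a = b := by abel
  rw [h1, h2]

lemma ttr_tkron {l m n : ℕ} [NeZero l]
    (A : Fin l → Matrix (Fin m) (Fin m) ℝ)
    (B : Fin l → Matrix (Fin n) (Fin n) ℝ) :
    ttr (tkron A B) = tkron (ttr A) (ttr B) := by
  funext k
  unfold ttr tkron
  rw [Matrix.transpose_sum]
  refine Fintype.sum_equiv (Equiv.neg (Fin l)) _ _ ?_
  intro k'
  simp only [Equiv.neg_apply]
  rw [← Matrix.kroneckerMap_transpose]
  have h1 : -(k - -k') = -k - k' := by abel
  have h2 : - -k' = k' := by abel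
  rw [h1, h2]

end Aux

theorem tkron_orthProjector {m n l : ℕ}
    (A : Fin l → Matrix (Fin m) (Fin m) ℝ) (B : Fin l → Matrix (Fin n) (Fin n) ℝ)
    (hA : tProd A A = A ∧ ttr A = A) (hB : tProd B B = B ∧ ttr B = B) :
    tProd (tkron A B) (tkron A B) = tkron A B ∧ ttr (tkron A B) = tkron A B := by
  rcases Nat.eq_zero_or_pos l with hl | hl
  · subst hl
    exact ⟨funext fun k => k.elim0, funext fun k => k.elim0⟩
  · haveI : NeZero l := ⟨hl.ne'⟩
    rw [tProd_tkron, ttr_tkron, hA.1, hA.2, hB.1, hB.2]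
    exact ⟨rfl, rfl⟩
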